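/- For any two distinct indices i and j, the resistance distance satisfies Ω(i,j) = ((L_{\{i}})⁻¹)_{j,j} = ((L_{\{j}})⁻¹)_{i,i}, where the entries of the inverses of the principal submatrices are indexed by the original indices. -/

import Mathlib

open Matrix BigOperators

/-- Powers of a row-stochastic nonnegative matrix are row-stochastic and nonnegative. -/
lemma aux_pow_stoch {n : ℕ} (P : Matrix (Fin n) (Fin n) ℝ)
    (hP0 : ∀ i j, 0 ≤ P i j) (hProw : ∀ i, ∑ j, P i j = 1) (m : ℕ) :
    (∀ i j, 0 ≤ (P ^ m) i j) ∧ (∀ i, ∑ j, (P ^ m) i j = 1) := by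
  induction m with
  | zero =>
    constructor
    · intro i j; simp [Matrix.one_apply]; split <;> norm_num
    · intro i; simp [Matrix.one_apply]
  | succ m ih =>
    rw [pow_succ]
    constructor
    · intro i j; rw [Matrix.mul_apply]
      exact Finset.sum_nonneg fun k _ => mul_nonneg (ih.1 i k) (hP0 k j)
    · intro i
      simp only [Matrix.mul_apply]
      rw [Finset.sum_comm]
      calc ∑ k, ∑ j, (P ^ m) i k * P k j
          = ∑ k, (P ^ m) i k * ∑ j, P k j := by
            simp [Finset.mul_sum]
        _ = ∑ k, (P ^ m) i k := by simp [hProw]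
        _ = 1 := ih.2 i

lemma aux_pow_fixed {n : ℕ} (P : Matrix (Fin n) (Fin n) ℝ) (v : Fin n → ℝ)
    (hv : P *ᵥ v = v) (m : ℕ) : (P ^ m) *ᵥ v = v := by
  induction m with
  | zero => simp
  | succ m ih => rw [pow_succ, ← Matrix.mulVec_mulVec, hv, ih]

/-- Fixed vectors of an irreducible stochastic matrix are constant. -/
lemma aux_const {n : ℕ} (hn : 2 ≤ n) (P : Matrix (Fin n) (Fin n) ℝ)
    (hP0 : ∀ i j, 0 ≤ P i j) (hProw : ∀ i, ∑ j, P i j = 1)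
    (hPirr : ∀ i j, ∃ m : ℕ, 1 ≤ m ∧ 0 < (P ^ m) i j)
    (v : Fin n → ℝ) (hv : P *ᵥ v = v) : ∀ a b, v a = v b := by
  have hne : (Finset.univ : Finset (Fin n)).Nonempty := by
    refine ⟨⟨0, by omega⟩, Finset.mem_univ _⟩
  obtain ⟨k, -, hk⟩ := Finset.exists_max_image Finset.univ v hne
  have key : ∀ l, v l = v k := by
    intro l
    obtain ⟨m, -, hm⟩ := hPirr k l
    have h0 := (aux_pow_stoch P hP0 hProw m).1
    have h1 := (aux_pow_stoch P hP0 hProw m).2 k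
    have hfix := congrFun (aux_pow_fixed P v hv m) k
    have hsum : ∑ r, (P ^ m) k r * (v k - v r) = 0 := by
      have : ∑ r, (P ^ m) k r * (v k - v r)
          = (∑ r, (P ^ m) k r) * v k - ∑ r, (P ^ m) k r * v r := by
        rw [Finset.sum_mul]; rw [← Finset.sum_sub_distrib]; ring_nf
        exact Finset.sum_congr rfl fun r _ => by ring
      rw [this, h1, one_mul]
      have : ∑ r, (P ^ m) k r * v r = v k := hfix
      rw [this]; ring
    have hz := (Finset.sum_eq_zero_iff_of_nonneg ?_).mp hsum l (Finset.mem_univ l)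
    · have := mul_eq_zero.mp hz
      rcases this with h | h
      · exact absurd h (ne_of_gt hm)
      · linarith
    · intro r _
      exact mul_nonneg (h0 k r) (by linarith [hk r (Finset.mem_univ r)])
  intro a b; rw [key a, key b]


lemma aux_sum_subtype_ne {n : ℕ} (i : Fin n) (F : Fin n → ℝ) (hFi : F i = 0) :
    ∑ l, F l = ∑ s : {x : Fin n // x ≠ i}, F s.val := by
  rw [← Finset.sum_subtype (Finset.univ.erase i)
    (by intro x; simp [Finset.mem_erase]) F]
  rw [← Finset.sum_erase_add Finset.univ F (Finset.mem_univ i), hFi, add_zero]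

/-- Any vector with zero coordinate sum is in the range of L. -/
lemma aux_preimage {n : ℕ} (hn : 2 ≤ n) (L : Matrix (Fin n) (Fin n) ℝ)
    (hrow : L *ᵥ (fun _ => 1) = 0)
    (hcol : ∀ l, ∑ k, L k l = 0)
    (hker : ∀ v, L *ᵥ v = 0 → ∀ a b, v a = v b)
    (b : Fin n → ℝ) (hb : ∑ k, b k = 0) :
    ∃ z, L *ᵥ z = b := by
  classical
  set f := L.mulVecLin with hf
  set g : (Fin n → ℝ) →ₗ[ℝ] ℝ := ∑ k : Fin n, LinearMap.proj k with hg
  have hgapp : ∀ v : Fin n → ℝ, g v = ∑ k, v k := by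
    intro v; simp [hg]
  have hone : (fun _ => (1:ℝ) : Fin n → ℝ) ≠ 0 := by
    intro h
    have := congrFun h ⟨0, by omega⟩
    simp at this
  have hkerf : LinearMap.ker f = Submodule.span ℝ {(fun _ => 1 : Fin n → ℝ)} := by
    apply le_antisymm
    · intro v hv
      have hv0 : L *ᵥ v = 0 := hv
      have h := hker v hv0
      have hv' : v = (v ⟨0, by omega⟩) • (fun _ => (1:ℝ)) := by
        funext a; simp [h a ⟨0, by omega⟩]
      rw [hv']
      exact Submodule.smul_mem _ _ (Submodule.mem_span_singleton_self _)
    · rw [Submodule.span_le]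
      intro v hv
      simp only [Set.mem_singleton_iff] at hv
      subst hv
      exact hrow
  have hfr : Module.finrank ℝ (LinearMap.ker f) = 1 := by
    rw [hkerf]; exact finrank_span_singleton hone
  have hdim : Module.finrank ℝ (Fin n → ℝ) = n := by simp
  have hrn := LinearMap.finrank_range_add_finrank_ker f
  rw [hfr, hdim] at hrn
  have hgsurj : LinearMap.range g = ⊤ := by
    rw [LinearMap.range_eq_top]
    intro r
    refine ⟨Pi.single ⟨0, by omega⟩ r, ?_⟩
    rw [hgapp]; simp
  have hrng := LinearMap.finrank_range_add_finrank_ker g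
  rw [hgsurj, hdim] at hrng
  have hgtop : Module.finrank ℝ (⊤ : Submodule ℝ ℝ) = 1 := by simp
  rw [hgtop] at hrng
  have hle : LinearMap.range f ≤ LinearMap.ker g := by
    rintro w ⟨z, rfl⟩
    rw [LinearMap.mem_ker, hgapp]
    have : ∀ k, f z k = ∑ l, L k l * z l := by
      intro k; rfl
    calc ∑ k, f z k = ∑ k, ∑ l, L k l * z l := by simp [this]
      _ = ∑ l, (∑ k, L k l) * z l := by
          rw [Finset.sum_comm]; simp [Finset.sum_mul]
      _ = 0 := by simp [hcol]
  have heq : LinearMap.range f = LinearMap.ker g := by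
    apply Submodule.eq_of_le_of_finrank_le hle
    omega
  have hbmem : b ∈ LinearMap.ker g := by rw [LinearMap.mem_ker, hgapp]; exact hb
  rw [← heq] at hbmem
  obtain ⟨z, hz⟩ := hbmem
  exact ⟨z, hz⟩

/-- The principal submatrix deleting row/column i is invertible. -/
lemma aux_sub_invertible {n : ℕ} (L : Matrix (Fin n) (Fin n) ℝ)
    (hcol : ∀ l, ∑ k, L k l = 0)
    (hker : ∀ v, L *ᵥ v = 0 → ∀ a b, v a = v b)
    (i : Fin n) :
    IsUnit (L.submatrix (Subtype.val : {x : Fin n // x ≠ i} → Fin n) Subtype.val).det := by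
  classical
  set Li := L.submatrix (Subtype.val : {x : Fin n // x ≠ i} → Fin n) Subtype.val with hLi
  rw [isUnit_iff_ne_zero]
  intro hdet
  obtain ⟨v, hv0, hv⟩ := Matrix.exists_mulVec_eq_zero_iff.mpr hdet
  set w : Fin n → ℝ := fun k => if h : k = i then 0 else v ⟨k, h⟩ with hw
  have hwi : w i = 0 := by simp [hw]
  have hwcoe : ∀ s : {x : Fin n // x ≠ i}, w s.val = v s := by
    intro s; simp [hw, s.prop]
  have hrowk : ∀ k : Fin n, k ≠ i → (L *ᵥ w) k = 0 := by
    intro k hk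
    have : (L *ᵥ w) k = ∑ l, L k l * w l := rfl
    rw [this, aux_sum_subtype_ne i (fun l => L k l * w l) (by simp [hwi])]
    have : ∑ s : {x : Fin n // x ≠ i}, L k s.val * w s.val
        = (Li *ᵥ v) ⟨k, hk⟩ := by
      simp only [Matrix.mulVec, dotProduct, hLi, Matrix.submatrix_apply]
      exact Finset.sum_congr rfl fun s _ => by rw [hwcoe]
    rw [this, hv]; rfl
  have htot : ∑ k, (L *ᵥ w) k = 0 := by
    simp only [Matrix.mulVec, dotProduct]
    rw [Finset.sum_comm]
    calc ∑ l, ∑ k, L k l * w l = ∑ l, (∑ k, L k l) * w l := by simp [Finset.sum_mul]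
      _ = 0 := by simp [hcol]
  have hrowi : (L *ᵥ w) i = 0 := by
    have he := Finset.sum_erase_add Finset.univ (fun k => (L *ᵥ w) k) (Finset.mem_univ i)
    have hz : ∑ x ∈ Finset.univ.erase i, (L *ᵥ w) x = 0 :=
      Finset.sum_eq_zero fun x hx => hrowk x (Finset.mem_erase.mp hx).1
    rw [hz, zero_add, htot] at he
    exact he
  have hLw : L *ᵥ w = 0 := by
    funext k
    by_cases hk : k = i
    · subst hk; exact hrowi
    · exact hrowk k hk
  have hconst := hker w hLw
  apply hv0
  funext s
  have : v s = w s.val := (hwcoe s).symm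
  rw [Pi.zero_apply, this, hconst s.val i, hwi]

/-- Main computational lemma. -/
lemma aux_key {n : ℕ} (hn : 2 ≤ n) (L M : Matrix (Fin n) (Fin n) ℝ)
    (hM1 : L * M * L = L)
    (hrow : L *ᵥ (fun _ => 1) = 0)
    (hcol : ∀ l, ∑ k, L k l = 0)
    (hker : ∀ v, L *ᵥ v = 0 → ∀ a b, v a = v b)
    (i j : Fin n) (hij : i ≠ j)
    (Li : Matrix {x : Fin n // x ≠ i} {x : Fin n // x ≠ i} ℝ)
    (hLi : Li = L.submatrix Subtype.val Subtype.val) :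
    M i i + M j j - M i j - M j i = Li⁻¹ ⟨j, hij.symm⟩ ⟨j, hij.symm⟩ := by
  classical
  set b : Fin n → ℝ := fun k => (if k = j then 1 else 0) - (if k = i then 1 else 0) with hb
  have hbsum : ∑ k, b k = 0 := by
    simp only [hb, Finset.sum_sub_distrib, Finset.sum_ite_eq', Finset.mem_univ, if_true]
    ring
  obtain ⟨z, hz⟩ := aux_preimage hn L hrow hcol hker b hbsum
  set x : Fin n → ℝ := M *ᵥ b with hx
  have hLx : L *ᵥ x = b := by
    rw [hx, ← hz, Matrix.mulVec_mulVec, Matrix.mulVec_mulVec, hM1, hz]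
  set x' : Fin n → ℝ := fun k => x k - x i with hx'
  have hx'eq : x' = x - (x i) • (fun _ => (1:ℝ)) := by
    funext k; simp [hx', smul_eq_mul]
  have hLx' : L *ᵥ x' = b := by
    rw [hx'eq, Matrix.mulVec_sub, Matrix.mulVec_smul, hrow, smul_zero, sub_zero, hLx]
  have hx'i : x' i = 0 := by simp [hx']
  set w : {x : Fin n // x ≠ i} → ℝ := fun s => x' s.val with hw
  have hLiw : Li *ᵥ w = fun s => b s.val := by
    funext s
    have h1 : (Li *ᵥ w) s = ∑ t : {x : Fin n // x ≠ i}, L s.val t.val * x' t.val := by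
      simp only [Matrix.mulVec, dotProduct, hLi, Matrix.submatrix_apply, hw]
    have h2 : ∑ l, L s.val l * x' l = ∑ t : {x : Fin n // x ≠ i}, L s.val t.val * x' t.val :=
      aux_sum_subtype_ne i (fun l => L s.val l * x' l) (by simp [hx'i])
    have h3 : ∑ l, L s.val l * x' l = (L *ᵥ x') s.val := rfl
    rw [h1, ← h2, h3, hLx']
  have hunit : IsUnit Li.det := by rw [hLi]; exact aux_sub_invertible L hcol hker i
  have hinv : Li⁻¹ * Li = 1 := Matrix.nonsing_inv_mul Li hunit
  have hww : w = Li⁻¹ *ᵥ (fun s => b s.val) := by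
    rw [← hLiw, Matrix.mulVec_mulVec, hinv, Matrix.one_mulVec]
  have hRHS : w ⟨j, hij.symm⟩ = Li⁻¹ ⟨j, hij.symm⟩ ⟨j, hij.symm⟩ := by
    rw [hww]
    have : (Li⁻¹ *ᵥ (fun s => b s.val)) ⟨j, hij.symm⟩
        = ∑ t : {x : Fin n // x ≠ i}, Li⁻¹ ⟨j, hij.symm⟩ t * b t.val := rfl
    rw [this]
    have hbt : ∀ t : {x : Fin n // x ≠ i},
        Li⁻¹ ⟨j, hij.symm⟩ t * b t.val
        = if t = ⟨j, hij.symm⟩ then Li⁻¹ ⟨j, hij.symm⟩ t else 0 := by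
      intro t
      by_cases h : t = (⟨j, hij.symm⟩ : {x : Fin n // x ≠ i})
      · subst h; simp [hb, hij.symm]
      · have hne : t.val ≠ j := fun hc => h (Subtype.ext hc)
        simp [hb, hne, t.prop, h]
    rw [Finset.sum_congr rfl (fun t _ => hbt t), Finset.sum_ite_eq']
    simp
  have hLHS : w ⟨j, hij.symm⟩ = M i i + M j j - M i j - M j i := by
    have hMb : ∀ k, (M *ᵥ b) k = M k j - M k i := by
      intro k
      have : (M *ᵥ b) k = ∑ l, M k l * b l := rfl
      rw [this]
      simp only [hb, mul_sub, Finset.sum_sub_distrib, mul_ite, mul_one, mul_zero,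
        Finset.sum_ite_eq', Finset.mem_univ, if_true]
    have : w ⟨j, hij.symm⟩ = x j - x i := rfl
    rw [this, hx, hMb j, hMb i]
    ring
  rw [← hLHS, hRHS]

/-- For distinct indices `i ≠ j`,
`Ω(i,j) = ((L_{\{i}})⁻¹)_{j,j} = ((L_{\{j}})⁻¹)_{i,i}`. -/
theorem directed_resistance_distance_via_submatrix
    {n : ℕ} (hn : 2 ≤ n)
    (P : Matrix (Fin n) (Fin n) ℝ)
    (hP0 : ∀ i j, 0 ≤ P i j)
    (hProw : ∀ i, ∑ j, P i j = 1)
    (hPirr : ∀ i j, ∃ m : ℕ, 1 ≤ m ∧ 0 < (P ^ m) i j)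
    (pv : Fin n → ℝ) (hpv0 : ∀ i, 0 < pv i) (hpvsum : ∑ i, pv i = 1)
    (hstat : pv ᵥ* P = pv)
    (d : ℝ) (hd : 0 < d)
    (L : Matrix (Fin n) (Fin n) ℝ)
    (hL : L = d • (Matrix.diagonal pv * (1 - P)))
    (M : Matrix (Fin n) (Fin n) ℝ)
    (hM1 : L * M * L = L) (hM2 : M * L * M = M)
    (hM3 : (L * M)ᵀ = L * M) (hM4 : (M * L)ᵀ = M * L)
    (Ω : Fin n → Fin n → ℝ)
    (hΩ : ∀ i j, Ω i j = M i i + M j j - M i j - M j i)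
    (i j : Fin n) (hij : i ≠ j)
    (Li : Matrix {x : Fin n // x ≠ i} {x : Fin n // x ≠ i} ℝ)
    (hLi : Li = L.submatrix Subtype.val Subtype.val)
    (Lj : Matrix {x : Fin n // x ≠ j} {x : Fin n // x ≠ j} ℝ)
    (hLj : Lj = L.submatrix Subtype.val Subtype.val) :
    Ω i j = Li⁻¹ ⟨j, hij.symm⟩ ⟨j, hij.symm⟩ ∧
    Ω i j = Lj⁻¹ ⟨i, hij⟩ ⟨i, hij⟩ := by
  classical
  -- entrywise formula for L *ᵥ v
  have hLmv : ∀ v : Fin n → ℝ, ∀ k, (L *ᵥ v) k = d * (pv k * (v k - (P *ᵥ v) k)) := by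
    intro v k
    rw [hL, Matrix.smul_mulVec, ← Matrix.mulVec_mulVec]
    have h1 : (1 - P) *ᵥ v = v - P *ᵥ v := by
      rw [Matrix.sub_mulVec, Matrix.one_mulVec]
    rw [h1]
    simp [Matrix.mulVec_diagonal]
  -- row sums zero
  have hrowL : L *ᵥ (fun _ => 1) = 0 := by
    funext k
    rw [hLmv]
    have : (P *ᵥ fun _ => (1:ℝ)) k = 1 := by
      simp [Matrix.mulVec, dotProduct, hProw k]
    rw [this]
    simp
  -- column sums zero
  have hcolL : ∀ l, ∑ k, L k l = 0 := by
    intro l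
    have hent : ∀ k, L k l = d * (pv k * ((if k = l then 1 else 0) - P k l)) := by
      intro k
      rw [hL]
      simp [Matrix.diagonal_mul, Matrix.sub_apply, Matrix.one_apply]
    calc ∑ k, L k l = ∑ k, d * (pv k * ((if k = l then 1 else 0) - P k l)) := by
          exact Finset.sum_congr rfl fun k _ => hent k
      _ = d * ((∑ k, (if k = l then pv k else 0)) - ∑ k, pv k * P k l) := by
          rw [← Finset.sum_sub_distrib, Finset.mul_sum]
          exact Finset.sum_congr rfl fun k _ => by split <;> ring
      _ = d * (pv l - (pv ᵥ* P) l) := by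
          rw [Finset.sum_ite_eq']
          simp [Matrix.vecMul, dotProduct]
      _ = 0 := by rw [hstat]; ring
  -- kernel is constants
  have hkerL : ∀ v, L *ᵥ v = 0 → ∀ a b, v a = v b := by
    intro v hv
    have hfix : P *ᵥ v = v := by
      funext k
      have h0 := congrFun hv k
      rw [hLmv] at h0
      have hdp : d * pv k ≠ 0 := (mul_pos hd (hpv0 k)).ne'
      have : v k - (P *ᵥ v) k = 0 := by
        rcases mul_eq_zero.mp h0 with h | h
        · exact absurd h hd.ne'
        · rcases mul_eq_zero.mp h with h' | h'
          · exact absurd h' (hpv0 k).ne'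
          · exact h'
      linarith [this]
    exact aux_const hn P hP0 hProw hPirr v hfix
  constructor
  · rw [hΩ]
    exact aux_key hn L M hM1 hrowL hcolL hkerL i j hij Li hLi
  · rw [hΩ]
    have h := aux_key hn L M hM1 hrowL hcolL hkerL j i hij.symm Lj hLj
    calc M i i + M j j - M i j - M j i
        = M j j + M i i - M j i - M i j := by ring
      _ = Lj⁻¹ ⟨i, hij⟩ ⟨i, hij⟩ := h
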